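/- Let Σ be a connected bidirected graph on the vertex set {1,…,d} with finite edge set E, m = #E, and incidence matrix A ∈ ℤ^{{1,…,d}×E}. Then the cokernel ℤ^E / A^T ℤ^d is isomorphic as an abelian group to: (1) ℤ^{m−d+1} if Σ has no halfedges and every circle of Σ is positive; (2) ℤ^{m−d} if Σ has at least one halfedge; (3) ℤ^{m−d} ⊕ ℤ/2ℤ if Σ has no halfedges and has at least one negative circle. (This computes the divisor class group Cl(R_P) of the toric ring of a signed poset P with Hasse diagram Σ.) -/

import Mathlib

open Matrix

/-- A column of an incidence matrix corresponding to a halfedge at some vertex. -/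
def IsHalfedgeCol {d : ℕ} (c : Fin d → ℤ) : Prop :=
  ∃ (i : Fin d) (s : ℤ), (s = 1 ∨ s = -1) ∧ c = s • Pi.single i (1 : ℤ)

/-- A column of an incidence matrix corresponding to an ordinary edge joining two
distinct vertices. -/
def IsEdgeCol {d : ℕ} (c : Fin d → ℤ) : Prop :=
  ∃ (i j : Fin d) (s s' : ℤ), i ≠ j ∧ (s = 1 ∨ s = -1) ∧ (s' = 1 ∨ s' = -1) ∧
    c = s • Pi.single i (1 : ℤ) + s' • Pi.single j (1 : ℤ)

/-- `A` is the incidence matrix of a bidirected graph: every column is a halfedge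
column or an ordinary edge column. -/
def IsBidirected {d : ℕ} {E : Type*} (A : Matrix (Fin d) E ℤ) : Prop :=
  ∀ e, IsHalfedgeCol (fun v => A v e) ∨ IsEdgeCol (fun v => A v e)

/-- The bidirected graph has a halfedge. -/
def HasHalfedge {d : ℕ} {E : Type*} (A : Matrix (Fin d) E ℤ) : Prop :=
  ∃ e, IsHalfedgeCol (fun v => A v e)

/-- Connectivity of the underlying multigraph of ordinary edges. -/
def ConnectedInc {d : ℕ} {E : Type*} (A : Matrix (Fin d) E ℤ) : Prop :=
  ∀ i j : Fin d,
    Relation.ReflTransGen (fun u v => u ≠ v ∧ ∃ e, A u e ≠ 0 ∧ A v e ≠ 0) i j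

/-- `(u 0, …, u (k-1) ; f 0, …, f (k-1))` is a circle of the bidirected graph with
incidence matrix `A`: distinct vertices, distinct ordinary edges, with `f t` joining
`u t` and `u ((t+1) % k)`. -/
def IsCircle {d : ℕ} {E : Type*} (A : Matrix (Fin d) E ℤ)
    (k : ℕ) (u : ℕ → Fin d) (f : ℕ → E) : Prop :=
  2 ≤ k ∧
  (∀ t t', t < k → t' < k → u t = u t' → t = t') ∧
  (∀ t t', t < k → t' < k → f t = f t' → t = t') ∧
  (∀ t < k, A (u t) (f t) ≠ 0 ∧ A (u ((t + 1) % k)) (f t) ≠ 0 ∧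
    ∀ v, A v (f t) ≠ 0 → v = u t ∨ v = u ((t + 1) % k))

/-- The product of the signs `σ(f_t) = −A(u_t, f_t)·A(u_{t+1}, f_t)` of the edges of a
circle; the circle is positive if this is `1` and negative if it is `-1`. -/
def circleSign {d : ℕ} {E : Type*} (A : Matrix (Fin d) E ℤ)
    (k : ℕ) (u : ℕ → Fin d) (f : ℕ → E) : ℤ :=
  ∏ t ∈ Finset.range k, (-(A (u t) (f t) * A (u ((t + 1) % k)) (f t)))



open Matrix Function

section Helpers

noncomputable def prodFinEquiv (a b : ℕ) :
    ((Fin a → ℤ) × (Fin b → ℤ)) ≃ₗ[ℤ] (Fin (a + b) → ℤ) :=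
  (LinearEquiv.sumArrowLequivProdArrow (Fin a) (Fin b) ℤ ℤ).symm.trans
    (LinearEquiv.funCongrLeft ℤ ℤ finSumFinEquiv.symm)

lemma fin_eq_of_lequiv {a b : ℕ} (e : (Fin a → ℤ) ≃ₗ[ℤ] (Fin b → ℤ)) : a = b :=
  le_antisymm (le_of_fin_injective ℤ e.toLinearMap e.injective)
    (le_of_fin_injective ℤ e.symm.toLinearMap e.symm.injective)

lemma free_fin (M : Type*) [AddCommGroup M] [Module ℤ M] [Module.Finite ℤ M]
    [Module.Free ℤ M] : ∃ n : ℕ, Nonempty (M ≃ₗ[ℤ] (Fin n → ℤ)) := by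
  let b := Module.Free.chooseBasis ℤ M
  exact ⟨Fintype.card (Module.Free.ChooseBasisIndex ℤ M),
    ⟨b.equivFun.trans (LinearEquiv.funCongrLeft ℤ ℤ (Fintype.equivFin _).symm)⟩⟩

/-- splitting of a surjection onto a free module, with the kernel presented by an
injective map `j`. -/
lemma split_equiv {M N K : Type*} [AddCommGroup M] [Module ℤ M] [AddCommGroup N]
    [Module ℤ N] [AddCommGroup K] [Module ℤ K] [Module.Free ℤ N]
    (f : M →ₗ[ℤ] N) (hf : Function.Surjective f)
    (j : K →ₗ[ℤ] M) (hj : Function.Injective j)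
    (hr : LinearMap.range j = LinearMap.ker f) :
    Nonempty (M ≃ₗ[ℤ] (K × N)) := by
  classical
  let b := Module.Free.chooseBasis ℤ N
  let g : N →ₗ[ℤ] M := b.constr ℕ (fun i => (hf (b i)).choose)
  have hfg : ∀ n, f (g n) = n := by
    suffices h : f.comp g = LinearMap.id by
      intro n; exact congrArg (fun φ => φ n) (congrArg DFunLike.coe h)
    apply b.ext
    intro i
    simp [g, (hf (b i)).choose_spec]
  have hfj : ∀ y, f (j y) = 0 := by
    intro y
    have : j y ∈ LinearMap.ker f := hr ▸ LinearMap.mem_range_self j y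
    exact this
  let ψ := j.coprod g
  have hbij : Function.Bijective ψ := by
    constructor
    · rintro ⟨y, n⟩ ⟨y', n'⟩ h
      have h' : j y + g n = j y' + g n' := h
      have hn : n = n' := by
        have := congrArg f h'
        simpa [hfg, hfj] using this
      subst hn
      have hy : j y = j y' := add_right_cancel h'
      exact Prod.ext (hj hy) rfl
    · intro x
      have hker : x - g (f x) ∈ LinearMap.ker f := by
        simp [LinearMap.mem_ker, hfg]
      rw [← hr] at hker
      obtain ⟨y, hy⟩ := hker
      refine ⟨(y, f x), ?_⟩
      show j y + g (f x) = x
      rw [hy]; abel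
  convert Nonempty.intro (LinearEquiv.ofBijective ψ hbij).symm
  exact Subsingleton.elim _ _

end Helpers

section Graph

variable {d : ℕ} {E : Type*} {A : Matrix (Fin d) E ℤ}

/-- `e` is an ordinary edge traversed from `p` to `q`. -/
def Step (A : Matrix (Fin d) E ℤ) (p q : Fin d) (e : E) : Prop :=
  p ≠ q ∧ A p e ≠ 0 ∧ A q e ≠ 0

lemma step_symm {p q e} (h : Step A p q e) : Step A q p e :=
  ⟨h.1.symm, h.2.2, h.2.1⟩

lemma edgeCol_apply {i j : Fin d} {s s' : ℤ} (hij : i ≠ j) (v : Fin d) :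
    ((s • Pi.single i (1 : ℤ) + s' • Pi.single j (1 : ℤ) : Fin d → ℤ)) v
      = if v = i then s else if v = j then s' else 0 := by
  rcases eq_or_ne v i with rfl | hvi
  · simp [Pi.single_eq_same, Pi.single_eq_of_ne (Ne.symm hij) ,
      Pi.single_eq_of_ne hij, hij]
  · rcases eq_or_ne v j with rfl | hvj
    · simp [Pi.single_eq_same, Pi.single_eq_of_ne hvi, hvi]
    · simp [Pi.single_eq_of_ne hvi, Pi.single_eq_of_ne hvj, hvi, hvj]

/-- structure of a column supporting a step -/
lemma step_col (hA : IsBidirected A) {p q : Fin d} {e : E} (h : Step A p q e) :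
    (A p e = 1 ∨ A p e = -1) ∧ (A q e = 1 ∨ A q e = -1) ∧
      (∀ v, v ≠ p → v ≠ q → A v e = 0) := by
  obtain ⟨hpq, hp, hq⟩ := h
  rcases hA e with ⟨i, s, hs, hc⟩ | ⟨i, j, s, s', hij, hs, hs', hc⟩
  · exfalso
    have hcol : ∀ v, A v e = s * (Pi.single i (1:ℤ) : Fin d → ℤ) v := by
      intro v
      have := congrFun hc v
      simpa using this
    have hip : p = i := by
      by_contra hne
      exact hp (by rw [hcol p, Pi.single_eq_of_ne hne, mul_zero])
    have hiq : q = i := by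
      by_contra hne
      exact hq (by rw [hcol q, Pi.single_eq_of_ne hne, mul_zero])
    exact hpq (hip.trans hiq.symm)
  · have hcol : ∀ v, A v e = if v = i then s else if v = j then s' else 0 := by
      intro v
      rw [show A v e = ((s • Pi.single i (1:ℤ) + s' • Pi.single j (1:ℤ) : Fin d → ℤ)) v from congrFun hc v]
      exact edgeCol_apply hij v
    have hmem : ∀ v : Fin d, A v e ≠ 0 → v = i ∨ v = j := by
      intro v hv
      by_contra hcon
      push_neg at hcon
      rw [hcol v, if_neg hcon.1, if_neg hcon.2] at hv
      exact hv rfl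
    have hpv := hmem p hp
    have hqv := hmem q hq
    have key : (p = i ∧ q = j) ∨ (p = j ∧ q = i) := by
      rcases hpv with rfl | rfl
      · rcases hqv with rfl | rfl
        · exact absurd rfl hpq
        · exact Or.inl ⟨rfl, rfl⟩
      · rcases hqv with rfl | rfl
        · exact Or.inr ⟨rfl, rfl⟩
        · exact absurd rfl hpq
    refine ⟨?_, ?_, ?_⟩
    · rcases key with ⟨rfl, rfl⟩ | ⟨rfl, rfl⟩
      · rw [hcol p, if_pos rfl]; exact hs
      · rw [hcol p, if_neg hij.symm, if_pos rfl]; exact hs'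
    · rcases key with ⟨rfl, rfl⟩ | ⟨rfl, rfl⟩
      · rw [hcol q, if_neg hij.symm, if_pos rfl]; exact hs'
      · rw [hcol q, if_pos rfl]; exact hs
    · intro v hvp hvq
      rw [hcol v]
      rcases key with ⟨rfl, rfl⟩ | ⟨rfl, rfl⟩
      · rw [if_neg hvp, if_neg hvq]
      · rw [if_neg hvq, if_neg hvp]

lemma step_sq (hA : IsBidirected A) {p q : Fin d} {e : E} (h : Step A p q e) :
    A p e * A p e = 1 ∧ A q e * A q e = 1 := by
  obtain ⟨h1, h2, _⟩ := step_col hA h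
  constructor
  · rcases h1 with h | h <;> rw [h] <;> ring
  · rcases h2 with h | h <;> rw [h] <;> ring

lemma step_sign (hA : IsBidirected A) {p q : Fin d} {e : E} (h : Step A p q e) :
    -(A p e * A q e) = 1 ∨ -(A p e * A q e) = -1 := by
  obtain ⟨h1, h2, _⟩ := step_col hA h
  rcases h1 with h1 | h1 <;> rcases h2 with h2 | h2 <;> rw [h1, h2] <;> simp


lemma step_eq {R : Type*} [CommRing R] (hA : IsBidirected A) {x : Fin d → R}
    (hx : ∀ e, ∑ v, (A v e : R) * x v = 0) {p q : Fin d} {e : E} (h : Step A p q e) :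
    x q = ((-(A p e * A q e) : ℤ) : R) * x p := by
  obtain ⟨_, _, hsupp⟩ := step_col hA h
  have hsub : ∑ v ∈ ({p, q} : Finset (Fin d)), (A v e : R) * x v
      = ∑ v, (A v e : R) * x v := by
    apply Finset.sum_subset (Finset.subset_univ _)
    intro v _ hv
    simp only [Finset.mem_insert, Finset.mem_singleton, not_or] at hv
    rw [hsupp v hv.1 hv.2]
    simp
  rw [Finset.sum_pair h.1] at hsub
  have hsum : (A p e : R) * x p + (A q e : R) * x q = 0 := by rw [hsub, hx e]
  have hq2 : (A q e : R) * (A q e : R) = 1 := by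
    have h2 := (step_sq hA h).2
    have := congrArg (Int.cast : ℤ → R) h2
    push_cast at this
    exact this
  have h2 := congrArg (fun z => (A q e : R) * z) hsum
  simp only [mul_add, mul_zero] at h2
  push_cast
  linear_combination h2 - x q * hq2

lemma prop_ker {R : Type*} [CommRing R] (hA : IsBidirected A) (hconn : ConnectedInc A)
    {x : Fin d → R} (hx : ∀ e, ∑ v, (A v e : R) * x v = 0) (i j : Fin d) :
    ∃ ε : ℤ, (ε = 1 ∨ ε = -1) ∧ x j = (ε : R) * x i := by
  induction hconn i j with
  | refl => exact ⟨1, Or.inl rfl, by simp⟩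
  | @tail b c hab hbc ih =>
    obtain ⟨ε, hε, hxb⟩ := ih
    obtain ⟨hne, e, he1, he2⟩ := hbc
    have hstep : Step A b c e := ⟨hne, he1, he2⟩
    have hq := step_eq hA hx hstep
    refine ⟨-(A b e * A c e) * ε, ?_, ?_⟩
    · rcases step_sign hA hstep with h | h <;> rcases hε with h' | h' <;>
        rw [h, h'] <;> simp
    · rw [hq, hxb]
      push_cast
      ring

lemma halfedge_col_apply {e : E} {i : Fin d} {s : ℤ}
    (hc : (fun v => A v e) = s • Pi.single i (1 : ℤ)) :
    A i e = s ∧ ∀ v, v ≠ i → A v e = 0 := by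
  have hcol : ∀ v, A v e = s * (Pi.single i (1:ℤ) : Fin d → ℤ) v := by
    intro v
    have := congrFun hc v
    simpa using this
  constructor
  · rw [hcol i, Pi.single_eq_same, mul_one]
  · intro v hv
    rw [hcol v, Pi.single_eq_of_ne hv, mul_zero]

lemma ker_zero_of_halfedge {R : Type*} [CommRing R] (hA : IsBidirected A)
    (hconn : ConnectedInc A) (hhe : HasHalfedge A)
    {x : Fin d → R} (hx : ∀ e, ∑ v, (A v e : R) * x v = 0) : x = 0 := by
  obtain ⟨e, i, s, hs, hc⟩ := hhe
  obtain ⟨hAi, hsupp⟩ := halfedge_col_apply hc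
  have hsub : ∑ v ∈ ({i} : Finset (Fin d)), (A v e : R) * x v
      = ∑ v, (A v e : R) * x v := by
    apply Finset.sum_subset (Finset.subset_univ _)
    intro v _ hv
    simp only [Finset.mem_singleton] at hv
    rw [hsupp v hv]
    simp
  rw [Finset.sum_singleton] at hsub
  have hxi : x i = 0 := by
    have h0 : (A i e : R) * x i = 0 := by rw [hsub, hx e]
    rw [hAi] at h0
    rcases hs with rfl | rfl
    · simpa using h0
    · push_cast at h0
      simpa [neg_eq_zero] using h0
  funext j
  obtain ⟨ε, _, hj⟩ := prop_ker hA hconn hx i j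
  rw [Pi.zero_apply, hj, hxi, mul_zero]

lemma circle_step (hA : IsBidirected A) {k : ℕ} {u : ℕ → Fin d} {f : ℕ → E}
    (hc : IsCircle A k u f) {t : ℕ} (ht : t < k) :
    Step A (u t) (u ((t + 1) % k)) (f t) := by
  obtain ⟨hk2, huinj, _, hstep⟩ := hc
  obtain ⟨h1, h2, _⟩ := hstep t ht
  refine ⟨?_, h1, h2⟩
  intro heq
  have h3 := huinj t ((t+1) % k) ht (Nat.mod_lt _ (by omega)) heq
  rcases Nat.lt_or_ge (t+1) k with h | h
  · rw [Nat.mod_eq_of_lt h] at h3; omega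
  · have : t = k - 1 := by omega
    have : (t+1) % k = 0 := by
      have : t + 1 = k := by omega
      simp [this]
    omega

lemma ker_two_torsion {R : Type*} [CommRing R] (hA : IsBidirected A)
    (hconn : ConnectedInc A) {k : ℕ} {u : ℕ → Fin d} {f : ℕ → E}
    (hc : IsCircle A k u f) (hneg : circleSign A k u f = -1)
    {x : Fin d → R} (hx : ∀ e, ∑ v, (A v e : R) * x v = 0) :
    ∀ j, (2 : R) * x j = 0 := by
  have hk2 : 2 ≤ k := hc.1
  have key : ∀ t, t ≤ k → x (u (t % k)) =
      ((∏ r ∈ Finset.range t, (-(A (u r) (f r) * A (u ((r+1) % k)) (f r))) : ℤ) : R)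
        * x (u 0) := by
    intro t
    induction t with
    | zero => intro _; simp [Nat.zero_mod]
    | succ t ih =>
      intro hlt
      have ht : t < k := by omega
      have ihh := ih (by omega)
      have hstep := circle_step hA hc ht
      have heq := step_eq hA hx hstep
      have hmod : t % k = t := Nat.mod_eq_of_lt ht
      rw [hmod] at ihh
      have hmod2 : (t + 1) % k = (t % k + 1) % k := by rw [hmod]
      rw [Finset.prod_range_succ, heq, ihh]
      push_cast
      ring
  have hx0 : (2 : R) * x (u 0) = 0 := by
    have := key k le_rfl
    rw [Nat.mod_self] at this
    rw [show (∏ r ∈ Finset.range k, (-(A (u r) (f r) * A (u ((r+1) % k)) (f r))))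
        = circleSign A k u f from rfl, hneg] at this
    push_cast at this
    linear_combination this
  intro j
  obtain ⟨ε, _, hj⟩ := prop_ker hA hconn hx (u 0) j
  rw [hj]
  calc (2:R) * ((ε:R) * x (u 0)) = (ε : R) * ((2:R) * x (u 0)) := by ring
  _ = 0 := by rw [hx0, mul_zero]


/-! ### Walks -/

def IsWalk (A : Matrix (Fin d) E ℤ) (k : ℕ) (u : ℕ → Fin d) (f : ℕ → E) : Prop :=
  ∀ t < k, Step A (u t) (u (t + 1)) (f t)

def wsign (A : Matrix (Fin d) E ℤ) (k : ℕ) (u : ℕ → Fin d) (f : ℕ → E) : ℤ :=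
  ∏ t ∈ Finset.range k, (-(A (u t) (f t) * A (u (t + 1)) (f t)))

lemma wsign_mul_self (hA : IsBidirected A) {k u f} (hw : IsWalk A k u f) :
    wsign A k u f * wsign A k u f = 1 := by
  unfold wsign
  rw [← Finset.prod_mul_distrib]
  rw [Finset.prod_congr rfl (fun t ht => ?_), Finset.prod_const_one]
  have ht := Finset.mem_range.mp ht
  have h := step_sq hA (hw t ht)
  linear_combination (A (u (t+1)) (f t) * A (u (t+1)) (f t)) * h.1 + h.2

lemma wsign_pm (hA : IsBidirected A) {k u f} (hw : IsWalk A k u f) :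
    wsign A k u f = 1 ∨ wsign A k u f = -1 :=
  Int.isUnit_iff.mp (IsUnit.of_mul_eq_one _ (wsign_mul_self hA hw))

lemma walkpos (hA : IsBidirected A)
    (hpos : ∀ k u f, IsCircle A k u f → circleSign A k u f = 1) :
    ∀ k u f, IsWalk A k u f → u k = u 0 → wsign A k u f = 1 := by
  intro k
  induction k using Nat.strong_induction_on with
  | _ k IH =>
  intro u f hw hcl
  rcases Nat.eq_zero_or_pos k with rfl | hk0
  · simp [wsign]
  rcases eq_or_ne k 1 with rfl | hk1
  · exact absurd hcl.symm (hw 0 (by omega)).1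
  have hk2 : 2 ≤ k := by omega
  by_cases hrep : ∃ a b, a < b ∧ b ≤ k ∧ b - a < k ∧ u a = u b
  · obtain ⟨a, b, hab, hbk, hban, huab⟩ := hrep
    set g : ℕ → ℤ := fun t => -(A (u t) (f t) * A (u (t + 1)) (f t)) with hg
    have hk₁pos : 1 ≤ b - a := by omega
    -- inner walk
    have hw1 : IsWalk A (b - a) (fun t => u (a + t)) (fun t => f (a + t)) := by
      intro t ht
      show Step A (u (a + t)) (u (a + (t + 1))) (f (a + t))
      rw [show a + (t + 1) = a + t + 1 from by omega]
      exact hw (a + t) (by omega)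
    have hcl1 : (fun t => u (a + t)) (b - a) = (fun t => u (a + t)) 0 := by
      simp only
      rw [show a + (b - a) = b from by omega, show a + 0 = a from by omega]
      exact huab.symm
    have hs1 : wsign A (b - a) (fun t => u (a + t)) (fun t => f (a + t)) = 1 :=
      IH (b - a) (by omega) _ _ hw1 hcl1
    -- outer walk
    set u2 : ℕ → Fin d := fun t => if t < a then u t else u (t + (b - a)) with hu2def
    set f2 : ℕ → E := fun t => if t < a then f t else f (t + (b - a)) with hf2def
    have hu2a : ∀ t, t ≤ a → u2 t = u t := by
      intro t ht
      show (if t < a then u t else u (t + (b - a))) = u t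
      by_cases h : t < a
      · rw [if_pos h]
      · have hta : t = a := by omega
        rw [if_neg h, hta, show a + (b - a) = b from by omega, ← huab]
    have hu2b : ∀ t, a ≤ t → u2 t = u (t + (b - a)) := by
      intro t ht
      show (if t < a then u t else u (t + (b - a))) = u (t + (b - a))
      by_cases h : t < a
      · have hta : t = a := by omega
        rw [if_pos h, hta, show a + (b - a) = b from by omega, huab]
      · rw [if_neg h]
    have hw2 : IsWalk A (k - (b - a)) u2 f2 := by
      intro t ht
      by_cases hta : t < a
      · have hft : f2 t = f t := if_pos hta
        rw [hft, hu2a t (by omega), hu2a (t+1) (by omega)]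
        exact hw t (by omega)
      · have hft : f2 t = f (t + (b - a)) := if_neg hta
        rw [hft, hu2b t (by omega), hu2b (t+1) (by omega),
          show t + 1 + (b - a) = t + (b - a) + 1 from by omega]
        exact hw (t + (b - a)) (by omega)
    have hcl2 : u2 (k - (b - a)) = u2 0 := by
      have h1 : u2 0 = u 0 := hu2a 0 (by omega)
      have h2 : u2 (k - (b - a)) = u (k - (b - a) + (b - a)) := hu2b _ (by omega)
      rw [h1, h2, show k - (b - a) + (b - a) = k from by omega, hcl]
    have hs2 : wsign A (k - (b - a)) u2 f2 = 1 :=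
      IH (k - (b - a)) (by omega) _ _ hw2 hcl2
    -- product splitting
    have hsplit : wsign A k u f
        = wsign A (b - a) (fun t => u (a + t)) (fun t => f (a + t))
          * wsign A (k - (b - a)) u2 f2 := by
      unfold wsign
      have e1 : ∏ t ∈ Finset.range k, g t
          = (∏ t ∈ Finset.range b, g t) * ∏ t ∈ Finset.range (k - b), g (b + t) := by
        rw [← Finset.prod_range_add g b (k - b), show b + (k - b) = k from by omega]
      have e2 : ∏ t ∈ Finset.range b, g t
          = (∏ t ∈ Finset.range a, g t) * ∏ t ∈ Finset.range (b - a), g (a + t) := by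
        rw [← Finset.prod_range_add g a (b - a), show a + (b - a) = b from by omega]
      have e3 : ∏ t ∈ Finset.range (b - a),
          (-(A (u (a + t)) (f (a + t)) * A (u (a + (t + 1))) (f (a + t))))
          = ∏ t ∈ Finset.range (b - a), g (a + t) := by
        apply Finset.prod_congr rfl
        intro t _
        rw [show a + (t + 1) = a + t + 1 from by omega]
      have e4 : ∏ t ∈ Finset.range (k - (b - a)),
          (-(A (u2 t) (f2 t) * A (u2 (t + 1)) (f2 t)))
          = (∏ t ∈ Finset.range a, g t) * ∏ t ∈ Finset.range (k - b), g (b + t) := by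
        rw [show k - (b - a) = a + (k - b) from by omega,
          Finset.prod_range_add (fun t => -(A (u2 t) (f2 t) * A (u2 (t + 1)) (f2 t))) a (k - b)]
        congr 1
        · apply Finset.prod_congr rfl
          intro t ht
          have ht := Finset.mem_range.mp ht
          rw [show f2 t = f t from if_pos ht, hu2a t (by omega), hu2a (t+1) (by omega)]
        · apply Finset.prod_congr rfl
          intro t ht
          have ht := Finset.mem_range.mp ht
          rw [show f2 (a + t) = f (a + t + (b - a)) from if_neg (by omega),
            hu2b (a + t) (by omega), hu2b (a + t + 1) (by omega),
            show a + t + (b - a) = b + t from by omega,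
            show a + t + 1 + (b - a) = b + t + 1 from by omega]
      rw [e3, e4, e1, e2]
      ring
    rw [hsplit, hs1, hs2, one_mul]
  · -- no nontrivial vertex repetitions
    have huinj : ∀ t t', t < k → t' < k → u t = u t' → t = t' := by
      intro t t' ht ht' he
      by_contra hne
      rcases Nat.lt_or_ge t t' with h | h
      · exact hrep ⟨t, t', h, by omega, by omega, he⟩
      · exact hrep ⟨t', t, by omega, by omega, by omega, he.symm⟩
    by_cases hk2f : k = 2 ∧ f 0 = f 1
    · obtain ⟨hkk, hff⟩ := hk2f
      subst hkk
      have h0 := step_sq hA (hw 0 (by omega))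
      unfold wsign
      rw [Finset.prod_range_succ, Finset.prod_range_one]
      have hu2 : u 2 = u 0 := hcl
      rw [hu2, ← hff]
      linear_combination (A (u 1) (f 0) * A (u 1) (f 0)) * h0.1 + h0.2
    · have hfinj : ∀ t t', t < k → t' < k → f t = f t' → t = t' := by
        have main : ∀ a b, a < b → b < k → f a = f b → False := by
          intro a b hab hbk hfe
          have hsa := hw a (by omega)
          have hsb := hw b (by omega)
          obtain ⟨_, _, hsupp⟩ := step_col hA hsa
          have hmem : ∀ v : Fin d, A v (f b) ≠ 0 → v = u a ∨ v = u (a + 1) := by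
            intro v hv
            rw [← hfe] at hv
            by_contra hcon
            push_neg at hcon
            exact hv (hsupp v hcon.1 hcon.2)
          have hb : u b = u (a + 1) := by
            rcases hmem (u b) hsb.2.1 with h | h
            · exact absurd (huinj b a hbk (by omega) h) (by omega)
            · exact h
          have hba : b = a + 1 := huinj b (a+1) hbk (by omega) hb
          have hb1 : u (b + 1) = u a := by
            rcases hmem (u (b+1)) hsb.2.2 with h | h
            · exact h
            · rw [← hb] at h
              exact absurd h.symm hsb.1
          have hbk1 : b + 1 = k := by
            by_contra hne
            have := huinj (b+1) a (by omega) (by omega) hb1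
            omega
          have ha0 : a = 0 := by
            have h0 : u (b + 1) = u 0 := by rw [hbk1, hcl]
            have := huinj a 0 (by omega) (by omega) (by rw [← hb1, h0])
            omega
          refine hk2f ⟨by omega, ?_⟩
          rw [show (0:ℕ) = a from ha0.symm, show (1:ℕ) = b from by omega]
          exact hfe
        intro t t' ht ht' he
        by_contra hne
        rcases Nat.lt_or_ge t t' with h | h
        · exact main t t' h ht' he
        · exact main t' t (by omega) ht he.symm
      have hmodu : ∀ t, t < k → u ((t + 1) % k) = u (t + 1) := by
        intro t ht
        rcases Nat.lt_or_ge (t+1) k with h | h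
        · rw [Nat.mod_eq_of_lt h]
        · have hkk : t + 1 = k := by omega
          rw [hkk, Nat.mod_self, ← hcl]
      have hcirc : IsCircle A k u f := by
        refine ⟨hk2, huinj, hfinj, ?_⟩
        intro t ht
        have hs := hw t ht
        obtain ⟨_, _, hsupp⟩ := step_col hA hs
        rw [hmodu t ht]
        refine ⟨hs.2.1, hs.2.2, ?_⟩
        intro v hv
        by_contra hcon
        push_neg at hcon
        exact hv (hsupp v hcon.1 hcon.2)
      have := hpos k u f hcirc
      unfold circleSign at this
      unfold wsign
      rw [← this]
      apply Finset.prod_congr rfl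
      intro t ht
      rw [hmodu t (Finset.mem_range.mp ht)]

lemma walk_concat {k₁ k₂ : ℕ} {u₁ u₂ : ℕ → Fin d} {f₁ f₂ : ℕ → E}
    (hw₁ : IsWalk A k₁ u₁ f₁) (hw₂ : IsWalk A k₂ u₂ f₂) (hjoin : u₁ k₁ = u₂ 0) :
    ∃ u f, IsWalk A (k₁ + k₂) u f ∧ u 0 = u₁ 0 ∧ u (k₁ + k₂) = u₂ k₂ ∧
      wsign A (k₁ + k₂) u f = wsign A k₁ u₁ f₁ * wsign A k₂ u₂ f₂ := by
  set u : ℕ → Fin d := fun t => if t ≤ k₁ then u₁ t else u₂ (t - k₁) with hudef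
  set f : ℕ → E := fun t => if t < k₁ then f₁ t else f₂ (t - k₁) with hfdef
  have hua : ∀ t, t ≤ k₁ → u t = u₁ t := fun t ht => if_pos ht
  have hub : ∀ t, u (k₁ + t) = u₂ t := by
    intro t
    rcases Nat.eq_zero_or_pos t with rfl | htpos
    · rw [hua (k₁ + 0) (by omega), show k₁ + 0 = k₁ from by omega, hjoin]
    · show (if k₁ + t ≤ k₁ then u₁ (k₁ + t) else u₂ (k₁ + t - k₁)) = u₂ t
      rw [if_neg (by omega), show k₁ + t - k₁ = t from by omega]
  have hw' : IsWalk A (k₁ + k₂) u f := by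
    intro t ht
    by_cases htk : t < k₁
    · rw [show f t = f₁ t from if_pos htk, hua t (by omega), hua (t+1) (by omega)]
      exact hw₁ t htk
    · have h1 : t = k₁ + (t - k₁) := by omega
      have h2 : u t = u₂ (t - k₁) := by
        conv_lhs => rw [h1]
        exact hub (t - k₁)
      have h3 : u (t + 1) = u₂ (t - k₁ + 1) := by
        rw [show t + 1 = k₁ + (t - k₁ + 1) from by omega]
        exact hub (t - k₁ + 1)
      rw [show f t = f₂ (t - k₁) from if_neg htk, h2, h3]
      exact hw₂ (t - k₁) (by omega)
  refine ⟨u, f, hw', hua 0 (by omega), by rw [hub k₂], ?_⟩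
  unfold wsign
  rw [Finset.prod_range_add]
  congr 1
  · apply Finset.prod_congr rfl
    intro t ht
    have ht := Finset.mem_range.mp ht
    rw [show f t = f₁ t from if_pos ht, hua t (by omega), hua (t+1) (by omega)]
  · apply Finset.prod_congr rfl
    intro t ht
    rw [show f (k₁ + t) = f₂ (k₁ + t - k₁) from if_neg (by omega),
      show k₁ + t - k₁ = t from by omega, hub t,
      show k₁ + t + 1 = k₁ + (t + 1) from by omega, hub (t+1)]

lemma walk_reverse {k : ℕ} {u : ℕ → Fin d} {f : ℕ → E} (hw : IsWalk A k u f) :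
    IsWalk A k (fun t => u (k - t)) (fun t => f (k - 1 - t)) ∧
      wsign A k (fun t => u (k - t)) (fun t => f (k - 1 - t)) = wsign A k u f := by
  constructor
  · intro t ht
    show Step A (u (k - t)) (u (k - (t + 1))) (f (k - 1 - t))
    rw [show k - t = (k - 1 - t) + 1 from by omega, show k - (t + 1) = k - 1 - t from by omega]
    exact step_symm (hw (k - 1 - t) (by omega))
  · unfold wsign
    rw [← Finset.prod_range_reflect (fun t => -(A (u t) (f t) * A (u (t + 1)) (f t))) k]
    apply Finset.prod_congr rfl
    intro t ht
    have ht := Finset.mem_range.mp ht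
    simp only
    rw [show k - t = (k - 1 - t) + 1 from by omega,
      show k - (t + 1) = k - 1 - t from by omega]
    ring

def SignOf (A : Matrix (Fin d) E ℤ) (i₀ j : Fin d) (s : ℤ) : Prop :=
  ∃ k u f, IsWalk A k u f ∧ u 0 = i₀ ∧ u k = j ∧ wsign A k u f = s

lemma signOf_refl (hE : Nonempty E) (i₀ : Fin d) : SignOf A i₀ i₀ 1 :=
  ⟨0, fun _ => i₀, fun _ => Classical.arbitrary E, fun t ht => absurd ht (by omega),
    rfl, rfl, by simp [wsign]⟩

lemma signOf_exists (hconn : ConnectedInc A) (hE : Nonempty E) (i₀ j : Fin d) :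
    ∃ s, SignOf A i₀ j s := by
  induction hconn i₀ j with
  | refl => exact ⟨1, signOf_refl hE i₀⟩
  | @tail b c hab hbc ih =>
    obtain ⟨s, k, u, f, hw, h0, hk, hs⟩ := ih
    obtain ⟨hne, e, he1, he2⟩ := hbc
    have hw2 : IsWalk A 1 (fun t => if t = 0 then b else c) (fun _ => e) := by
      intro t ht
      have : t = 0 := by omega
      subst this
      show Step A b c e
      exact ⟨hne, he1, he2⟩
    obtain ⟨u', f', hw', h0', hk', hs'⟩ := walk_concat hw hw2 hk
    exact ⟨s * wsign A 1 (fun t => if t = 0 then b else c) (fun _ => e),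
      k + 1, u', f', hw', by rw [h0', h0], hk', by rw [hs', hs]⟩

lemma signOf_unique (hA : IsBidirected A)
    (hpos : ∀ k u f, IsCircle A k u f → circleSign A k u f = 1)
    {i₀ j : Fin d} {s s' : ℤ} (h1 : SignOf A i₀ j s) (h2 : SignOf A i₀ j s') :
    s = s' := by
  obtain ⟨k₁, u₁, f₁, hw₁, h10, h1k, hs1⟩ := h1
  obtain ⟨k₂, u₂, f₂, hw₂, h20, h2k, hs2⟩ := h2
  obtain ⟨hwr, hsr⟩ := walk_reverse hw₂
  obtain ⟨u', f', hw', h0', hk', hs'⟩ := walk_concat hw₁ hwr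
    (show u₁ k₁ = u₂ (k₂ - 0) from by rw [Nat.sub_zero, h1k, h2k])
  have hclosed : u' (k₁ + k₂) = u' 0 := by
    rw [hk', h0', h10]
    show u₂ (k₂ - k₂) = i₀
    rw [Nat.sub_self, h20]
  have hone := walkpos hA hpos (k₁ + k₂) u' f' hw' hclosed
  rw [hs', hsr, hs1, hs2] at hone
  have hpm1 : s = 1 ∨ s = -1 := hs1 ▸ wsign_pm hA hw₁
  have hpm2 : s' = 1 ∨ s' = -1 := hs2 ▸ wsign_pm hA hw₂
  rcases hpm1 with rfl | rfl <;> rcases hpm2 with rfl | rfl <;> omega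

lemma exists_eta (hA : IsBidirected A) (hconn : ConnectedInc A)
    (hnh : ¬ HasHalfedge A)
    (hpos : ∀ k u f, IsCircle A k u f → circleSign A k u f = 1) (hd : 1 ≤ d) :
    ∃ η : Fin d → ℤ, η ⟨0, hd⟩ = 1 ∧ (∀ j, η j = 1 ∨ η j = -1) ∧
      (∀ e, ∑ v, A v e * η v = 0) := by
  by_cases hE : Nonempty E
  · set i₀ : Fin d := ⟨0, hd⟩
    have hex := signOf_exists hconn hE i₀
    set η : Fin d → ℤ := fun j => (hex j).choose with hηdef
    have hη : ∀ j, SignOf A i₀ j (η j) := fun j => (hex j).choose_spec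
    have hη0 : η i₀ = 1 := signOf_unique hA hpos (hη i₀) (signOf_refl hE i₀)
    have hηpm : ∀ j, η j = 1 ∨ η j = -1 := by
      intro j
      obtain ⟨k, u, f, hw, _, _, hs⟩ := hη j
      exact hs ▸ wsign_pm hA hw
    refine ⟨η, hη0, hηpm, ?_⟩
    intro e
    rcases hA e with hhe | ⟨i, j, s, s', hij, hs, hs', hc⟩
    · exact absurd ⟨e, hhe⟩ hnh
    · have hcol : ∀ v, A v e = if v = i then s else if v = j then s' else 0 := by
        intro v
        rw [show A v e = ((s • Pi.single i (1:ℤ) + s' • Pi.single j (1:ℤ) : Fin d → ℤ)) v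
          from congrFun hc v]
        exact edgeCol_apply hij v
      have hAi : A i e = s := by rw [hcol i, if_pos rfl]
      have hAj : A j e = s' := by rw [hcol j, if_neg hij.symm, if_pos rfl]
      have hstep : Step A i j e := by
        refine ⟨hij, ?_, ?_⟩
        · rw [hAi]; rcases hs with rfl | rfl <;> omega
        · rw [hAj]; rcases hs' with rfl | rfl <;> omega
      -- extend a walk to i by the edge e
      obtain ⟨k, u, f, hw, h0, hk, hsgn⟩ := hη i
      have hw2 : IsWalk A 1 (fun t => if t = 0 then i else j) (fun _ => e) := by
        intro t ht
        have : t = 0 := by omega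
        subst this
        exact hstep
      obtain ⟨u', f', hw', h0', hk', hs'2⟩ := walk_concat hw hw2 hk
      have hsign1 : wsign A 1 (fun t => if t = 0 then i else j) (fun _ => e)
          = -(s * s') := by
        unfold wsign
        rw [Finset.prod_range_one]
        show -(A i e * A j e) = -(s * s')
        rw [hAi, hAj]
      have hSj : SignOf A i₀ j (η i * -(s * s')) :=
        ⟨k + 1, u', f', hw', by rw [h0', h0], hk',
          by rw [hs'2, hsgn, hsign1]⟩
      have hηj : η j = η i * -(s * s') := signOf_unique hA hpos (hη j) hSj
      -- compute the sum
      have hsub : ∑ v ∈ ({i, j} : Finset (Fin d)), A v e * η v = ∑ v, A v e * η v := by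
        apply Finset.sum_subset (Finset.subset_univ _)
        intro v _ hv
        simp only [Finset.mem_insert, Finset.mem_singleton, not_or] at hv
        rw [hcol v, if_neg hv.1, if_neg hv.2, zero_mul]
      rw [← hsub, Finset.sum_pair hij, hAi, hAj, hηj]
      rcases hs' with rfl | rfl <;> ring
  · exact ⟨fun j => if j = ⟨0, hd⟩ then 1 else 1, by simp, fun j => by simp,
      fun e => absurd ⟨e⟩ hE⟩


lemma ker_eta_form {R : Type*} [CommRing R] (hA : IsBidirected A) (hconn : ConnectedInc A)
    {η : Fin d → ℤ} {i₀ : Fin d} (hη0 : η i₀ = 1) (hηker : ∀ e, ∑ v, A v e * η v = 0)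
    {x : Fin d → R} (hx : ∀ e, ∑ v, (A v e : R) * x v = 0) :
    ∀ v, x v = (η v : R) * x i₀ := by
  set z : Fin d → R := fun v => x v - (η v : R) * x i₀ with hz
  have hzker : ∀ e, ∑ v, (A v e : R) * z v = 0 := by
    intro e
    have h1 : ∑ v, (A v e : R) * z v
        = (∑ v, (A v e : R) * x v) - (∑ v, ((A v e * η v : ℤ) : R)) * x i₀ := by
      rw [Finset.sum_mul, ← Finset.sum_sub_distrib]
      apply Finset.sum_congr rfl
      intro v _
      push_cast
      ring
    rw [h1, hx e, ← Int.cast_sum, hηker e]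
    simp
  have hz0 : z i₀ = 0 := by simp [hz, hη0]
  intro v
  obtain ⟨ε, _, hv⟩ := prop_ker hA hconn hzker i₀ v
  have : z v = 0 := by rw [hv, hz0, mul_zero]
  have hzv : x v - (η v : R) * x i₀ = 0 := this
  linear_combination hzv

lemma ker_mod2_const (hA : IsBidirected A) (hconn : ConnectedInc A)
    {x : Fin d → ZMod 2} (hx : ∀ e, ∑ v, (A v e : ZMod 2) * x v = 0) :
    ∀ v w, x v = x w := by
  intro v w
  obtain ⟨ε, hε, hv⟩ := prop_ker hA hconn hx w v
  have hone : (ε : ZMod 2) = 1 := by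
    rcases hε with rfl | rfl <;> decide
  rw [hv, hone, one_mul]

lemma col_sum_even (hA : IsBidirected A) (hnh : ¬ HasHalfedge A) (e : E) :
    ∃ c : ℤ, ∑ v, A v e = 2 * c := by
  rcases hA e with hhe | ⟨i, j, s, s', hij, hs, hs', hc⟩
  · exact absurd ⟨e, hhe⟩ hnh
  · have hcol : ∀ v, A v e = if v = i then s else if v = j then s' else 0 := by
      intro v
      rw [show A v e = ((s • Pi.single i (1:ℤ) + s' • Pi.single j (1:ℤ) : Fin d → ℤ)) v
        from congrFun hc v]
      exact edgeCol_apply hij v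
    have hsub : ∑ v ∈ ({i, j} : Finset (Fin d)), A v e = ∑ v, A v e := by
      apply Finset.sum_subset (Finset.subset_univ _)
      intro v _ hv
      simp only [Finset.mem_insert, Finset.mem_singleton, not_or] at hv
      rw [hcol v, if_neg hv.1, if_neg hv.2]
    have hsum : ∑ v, A v e = s + s' := by
      rw [← hsub, Finset.sum_pair hij, hcol i, hcol j, if_pos rfl, if_neg hij.symm,
        if_pos rfl]
    rcases hs with rfl | rfl <;> rcases hs' with rfl | rfl <;> rw [hsum]
    · exact ⟨1, by ring⟩
    · exact ⟨0, by ring⟩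
    · exact ⟨0, by ring⟩
    · exact ⟨-1, by ring⟩

end Graph

lemma exists_div {ι : Type*} (n : ℤ) (y : ι → ℤ) (h : ∀ v, n ∣ y v) :
    ∃ w : ι → ℤ, y = n • w := by
  refine ⟨fun v => (h v).choose, funext fun v => ?_⟩
  have := (h v).choose_spec
  simpa [Pi.smul_apply, smul_eq_mul] using this


set_option maxHeartbeats 1000000 in
theorem divisor_class_group_of_signed_poset
    (d : ℕ) (hd : 1 ≤ d) (E : Type*) [Fintype E]
    (A : Matrix (Fin d) E ℤ)
    (hA : IsBidirected A) (hconn : ConnectedInc A) :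
    ((¬ HasHalfedge A) ∧ (∀ k u f, IsCircle A k u f → circleSign A k u f = 1) →
      Nonempty (((E → ℤ) ⧸ LinearMap.range (Matrix.mulVecLin Aᵀ)) ≃+
        (Fin (Fintype.card E + 1 - d) → ℤ))) ∧
    (HasHalfedge A →
      Nonempty (((E → ℤ) ⧸ LinearMap.range (Matrix.mulVecLin Aᵀ)) ≃+
        (Fin (Fintype.card E - d) → ℤ))) ∧
    ((¬ HasHalfedge A) ∧ (∃ k u f, IsCircle A k u f ∧ circleSign A k u f = -1) →
      Nonempty (((E → ℤ) ⧸ LinearMap.range (Matrix.mulVecLin Aᵀ)) ≃+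
        ((Fin (Fintype.card E - d) → ℤ) × ZMod 2))) := by
  classical
  set T : (Fin d → ℤ) →ₗ[ℤ] (E → ℤ) := Matrix.mulVecLin Aᵀ with hTdef
  set L : Submodule ℤ (E → ℤ) := LinearMap.range T with hLdef
  set i₀ : Fin d := ⟨0, hd⟩ with hi₀def
  have hTe : ∀ (y : Fin d → ℤ) (e : E), T y e = ∑ v, A v e * y v := by
    intro y e
    simp [hTdef, Matrix.mulVecLin_apply, Matrix.mulVec, Matrix.vecMul,
      dotProduct, Matrix.transpose_apply, mul_comm]
  have hker_int : ∀ y : Fin d → ℤ, T y = 0 → ∀ e, ∑ v, ((A v e : ℤ) : ℤ) * y v = 0 := by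
    intro y hy e
    have h1 := congrFun hy e
    rw [hTe y e] at h1
    simpa [Int.cast_id] using h1
  have hbridge : ∀ (n : ℕ) (y : Fin d → ℤ) (x : E → ℤ), T y = (n : ℤ) • x →
      ∀ e, ∑ v, ((A v e : ℤ) : ZMod n) * ((y v : ℤ) : ZMod n) = 0 := by
    intro n y x h e
    have h1 : ∑ v, A v e * y v = (n : ℤ) * x e := by
      rw [← hTe y e, h]; simp
    have h2 := congrArg (fun z : ℤ => (z : ZMod n)) h1
    push_cast at h2
    rw [h2, ZMod.natCast_self, zero_mul]
  have hdvd : ∀ (n : ℕ) (a : ℤ), ((a : ZMod n) = 0) → (n : ℤ) ∣ a :=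
    fun n a h => (ZMod.intCast_zmod_eq_zero_iff_dvd a n).mp h
  have habs : ∀ (M : Submodule ℤ (E → ℤ)) (x : E → ℤ) (c : ℤ), c • x ∈ M →
      ((c.natAbs : ℤ)) • x ∈ M := by
    intro M x c hcx
    rcases Int.natAbs_eq c with h | h
    · rwa [← h]
    · rw [show ((c.natAbs : ℤ)) = -c from by omega, neg_smul]
      exact Submodule.neg_mem M hcx
  have hEquivE : ∀ n : ℕ, ((E → ℤ) ≃ₗ[ℤ] (Fin n → ℤ)) → Fintype.card E = n := by
    intro n e
    exact fin_eq_of_lequiv (((LinearEquiv.funCongrLeft ℤ ℤ (Fintype.equivFin E)).trans e))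
  refine ⟨?_, ?_, ?_⟩
  · -- Case 1 : balanced, no halfedges
    rintro ⟨hnh, hpos⟩
    obtain ⟨η, hηi₀, hηpm, hηker⟩ := exists_eta hA hconn hnh hpos hd
    have hη' : η i₀ = 1 := hηi₀
    have hTη : T η = 0 := funext fun e => by rw [hTe, hηker e]; rfl
    have hker_le : LinearMap.ker T ≤ Submodule.span ℤ {η} := by
      intro y hy
      have hy0 := hker_int y (LinearMap.mem_ker.mp hy)
      have hform := ker_eta_form hA hconn hηi₀ hηker hy0
      have hyy : y = y i₀ • η := funext fun v => by
        have h2 := hform v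
        simp only [Int.cast_id] at h2
        simp only [Pi.smul_apply, smul_eq_mul]
        rw [h2]; ring
      rw [hyy]
      exact Submodule.smul_mem _ _ (Submodule.mem_span_singleton_self η)
    set K := (Fin d → ℤ) ⧸ Submodule.span ℤ {η} with hKdef
    have hKtf : NoZeroSMulDivisors ℤ K := by
      constructor
      intro c q hcq
      by_cases hc : c = 0
      · exact Or.inl hc
      right
      obtain ⟨y, rfl⟩ := Submodule.Quotient.mk_surjective _ q
      rw [← Submodule.Quotient.mk_smul, Submodule.Quotient.mk_eq_zero] at hcq
      obtain ⟨a, ha⟩ := Submodule.mem_span_singleton.mp hcq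
      have ha' : a = c * y i₀ := by
        have h3 := congrFun ha i₀
        simp only [Pi.smul_apply, smul_eq_mul, hη', mul_one] at h3
        exact h3
      have hy : y = y i₀ • η := by
        have h1 : c • (y - y i₀ • η) = 0 := by
          funext v
          have h3 := congrFun ha v
          simp only [Pi.smul_apply, smul_eq_mul] at h3
          rw [ha'] at h3
          simp only [Pi.smul_apply, Pi.sub_apply, smul_eq_mul, Pi.zero_apply]
          linear_combination -h3
        have h2 := smul_right_injective (Fin d → ℤ) hc (h1.trans (smul_zero c).symm)
        rwa [sub_eq_zero] at h2
      rw [Submodule.Quotient.mk_eq_zero, hy]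
      exact Submodule.smul_mem _ _ (Submodule.mem_span_singleton_self η)
    haveI := hKtf
    have hsat : ∀ (x : E → ℤ) (c : ℤ), c ≠ 0 → c • x ∈ L → x ∈ L := by
      intro x c hc hcx
      set n : ℕ := c.natAbs with hn
      have hn0 : (n : ℤ) ≠ 0 := Int.natCast_ne_zero.mpr (Int.natAbs_ne_zero.mpr hc)
      have hnx : (n : ℤ) • x ∈ L := habs L x c hcx
      obtain ⟨y, hy⟩ := hnx
      have hker := hbridge n y x hy
      have hform := ker_eta_form hA hconn hηi₀ hηker hker
      have hdvd' : ∀ v, (n : ℤ) ∣ (y v - η v * y i₀) := by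
        intro v
        apply hdvd
        push_cast
        rw [hform v]
        ring
      obtain ⟨w, hw⟩ := exists_div (n : ℤ) (fun v => y v - η v * y i₀) hdvd'
      have hyeq : y = y i₀ • η + (n : ℤ) • w := by
        funext v
        have h3 := congrFun hw v
        simp only [Pi.smul_apply, smul_eq_mul] at h3 ⊢
        simp only [Pi.add_apply, Pi.smul_apply, smul_eq_mul]
        linarith [h3]
      have hTy : T y = (n : ℤ) • T w := by
        rw [hyeq, _root_.map_add, _root_.map_smul, _root_.map_smul, hTη, smul_zero, zero_add]
      rw [hTy] at hy
      exact ⟨w, smul_right_injective (E → ℤ) hn0 hy⟩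
    set Q := (E → ℤ) ⧸ L with hQdef
    have hQtf : NoZeroSMulDivisors ℤ Q := by
      constructor
      intro c q hcq
      by_cases hc : c = 0
      · exact Or.inl hc
      right
      obtain ⟨x, rfl⟩ := Submodule.Quotient.mk_surjective _ q
      rw [← Submodule.Quotient.mk_smul, Submodule.Quotient.mk_eq_zero] at hcq
      rw [Submodule.Quotient.mk_eq_zero]
      exact hsat x c hc hcq
    haveI := hQtf
    have hspan_le : Submodule.span ℤ {η} ≤ LinearMap.ker T :=
      Submodule.span_le.mpr (Set.singleton_subset_iff.mpr (LinearMap.mem_ker.mpr hTη))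
    set j : K →ₗ[ℤ] (E → ℤ) := Submodule.liftQ _ T hspan_le with hjdef
    have hjinj : Function.Injective j :=
      LinearMap.ker_eq_bot.mp (Submodule.ker_liftQ_eq_bot _ T hspan_le hker_le)
    have hjrange : LinearMap.range j = LinearMap.ker L.mkQ := by
      rw [hjdef, Submodule.range_liftQ, Submodule.ker_mkQ]
    obtain ⟨eSplit⟩ := split_equiv L.mkQ (Submodule.mkQ_surjective L) j hjinj hjrange
    set j2 : ℤ →ₗ[ℤ] (Fin d → ℤ) := LinearMap.toSpanSingleton ℤ _ η with hj2def
    have hj2inj : Function.Injective j2 := by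
      intro a b hab
      have h3 := congrFun hab i₀
      simpa only [hj2def, LinearMap.toSpanSingleton_apply, Pi.smul_apply, smul_eq_mul,
        hη', mul_one] using h3
    have hj2range : LinearMap.range j2 = LinearMap.ker (Submodule.span ℤ {η}).mkQ := by
      rw [Submodule.ker_mkQ, hj2def, ← LinearMap.span_singleton_eq_range]
    obtain ⟨eSplit2⟩ := split_equiv (Submodule.span ℤ {η}).mkQ
      (Submodule.mkQ_surjective _) j2 hj2inj hj2range
    obtain ⟨nK, ⟨eK⟩⟩ := free_fin K
    obtain ⟨nQ, ⟨eQ⟩⟩ := free_fin Q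
    have hcount1 : d = 1 + nK :=
      fin_eq_of_lequiv ((eSplit2.trans
        (LinearEquiv.prodCongr (LinearEquiv.funUnique (Fin 1) ℤ ℤ).symm eK)).trans
        (prodFinEquiv 1 nK))
    have hcount2 : Fintype.card E = nK + nQ :=
      hEquivE _ ((eSplit.trans (LinearEquiv.prodCongr eK eQ)).trans (prodFinEquiv nK nQ))
    rw [show Fintype.card E + 1 - d = nQ from by omega]
    exact ⟨eQ.toAddEquiv⟩
  · -- Case 2 : halfedge
    intro hhe
    have hTinj : Function.Injective T := by
      refine LinearMap.ker_eq_bot.mp (LinearMap.ker_eq_bot'.mpr ?_)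
      intro y hy
      exact ker_zero_of_halfedge hA hconn hhe (hker_int y hy)
    have hsat : ∀ (x : E → ℤ) (c : ℤ), c ≠ 0 → c • x ∈ L → x ∈ L := by
      intro x c hc hcx
      set n : ℕ := c.natAbs with hn
      have hn0 : (n : ℤ) ≠ 0 := Int.natCast_ne_zero.mpr (Int.natAbs_ne_zero.mpr hc)
      have hnx : (n : ℤ) • x ∈ L := habs L x c hcx
      obtain ⟨y, hy⟩ := hnx
      have hker := hbridge n y x hy
      have h0 := ker_zero_of_halfedge hA hconn hhe hker
      have hdvd' : ∀ v, (n : ℤ) ∣ y v := fun v =>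
        hdvd n (y v) (by simpa using congrFun h0 v)
      obtain ⟨w, rfl⟩ := exists_div _ y hdvd'
      rw [_root_.map_smul] at hy
      exact ⟨w, smul_right_injective (E → ℤ) hn0 hy⟩
    set Q := (E → ℤ) ⧸ L with hQdef
    have hQtf : NoZeroSMulDivisors ℤ Q := by
      constructor
      intro c q hcq
      by_cases hc : c = 0
      · exact Or.inl hc
      right
      obtain ⟨x, rfl⟩ := Submodule.Quotient.mk_surjective _ q
      rw [← Submodule.Quotient.mk_smul, Submodule.Quotient.mk_eq_zero] at hcq
      rw [Submodule.Quotient.mk_eq_zero]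
      exact hsat x c hc hcq
    haveI := hQtf
    have hjrange : LinearMap.range T = LinearMap.ker L.mkQ := by
      rw [Submodule.ker_mkQ]
    obtain ⟨eSplit⟩ := split_equiv L.mkQ (Submodule.mkQ_surjective L) T hTinj hjrange
    obtain ⟨nQ, ⟨eQ⟩⟩ := free_fin Q
    have hcount : Fintype.card E = d + nQ :=
      hEquivE _ ((eSplit.trans
        (LinearEquiv.prodCongr (LinearEquiv.refl ℤ (Fin d → ℤ)) eQ)).trans
        (prodFinEquiv d nQ))
    rw [show Fintype.card E - d = nQ from by omega]
    exact ⟨eQ.toAddEquiv⟩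
  · -- Case 3 : negative circle, no halfedges
    rintro ⟨hnh, k, u, f, hcirc, hneg⟩
    have hTinj : Function.Injective T := by
      refine LinearMap.ker_eq_bot.mp (LinearMap.ker_eq_bot'.mpr ?_)
      intro y hy
      have h2 := ker_two_torsion hA hconn hcirc hneg (hker_int y hy)
      funext v
      have h3 := h2 v
      simp only [Int.cast_id, Pi.zero_apply] at h3 ⊢
      omega
    set one : Fin d → ℤ := fun _ => 1 with honedef
    set x₀ : E → ℤ := fun e => (col_sum_even hA hnh e).choose with hx₀def
    have hTone : T one = (2 : ℤ) • x₀ := by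
      funext e
      rw [hTe]
      have h3 := (col_sum_even hA hnh e).choose_spec
      simp only [Pi.smul_apply, smul_eq_mul, honedef, mul_one]
      exact h3
    have hx₀L : (2 : ℤ) • x₀ ∈ L := ⟨one, hTone⟩
    have hx₀nL : x₀ ∉ L := by
      rintro ⟨z, hz⟩
      have h1 : T ((2 : ℤ) • z - one) = 0 := by
        rw [_root_.map_sub, _root_.map_smul, hz, hTone]
        abel
      have h2 : (2 : ℤ) • z - one = 0 := by
        apply hTinj
        rw [h1, _root_.map_zero]
      have h3 := congrFun h2 i₀
      simp only [Pi.sub_apply, Pi.smul_apply, smul_eq_mul, honedef, Pi.zero_apply] at h3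
      omega
    have hsat3 : ∀ (x : E → ℤ) (n : ℕ), 0 < n → (n : ℤ) • x ∈ L → (2 : ℤ) • x ∈ L := by
      intro x n hn hnx
      obtain ⟨y, hy⟩ := hnx
      have hker := hbridge n y x hy
      have h2t := ker_two_torsion hA hconn hcirc hneg hker
      rcases Nat.even_or_odd n with ⟨m, hm⟩ | hodd
      · have hm1 : 0 < m := by omega
        have hdvd2 : ∀ v, (n : ℤ) ∣ 2 * y v := by
          intro v
          apply hdvd
          push_cast
          exact h2t v
        obtain ⟨w, hw⟩ := exists_div (n : ℤ) (fun v => 2 * y v) hdvd2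
        have hym : y = (m : ℤ) • w := by
          funext v
          have h5 := congrFun hw v
          simp only [Pi.smul_apply, smul_eq_mul] at h5 ⊢
          have hn2 : (n : ℤ) = 2 * (m : ℤ) := by
            have : n = 2 * m := by omega
            exact_mod_cast this
          rw [hn2] at h5
          have h6 : (2 : ℤ) * y v = 2 * ((m : ℤ) * w v) := by linarith [h5]
          exact mul_left_cancel₀ two_ne_zero h6
        rw [hym, _root_.map_smul] at hy
        have h6 : (m : ℤ) • T w = (m : ℤ) • ((2 : ℤ) • x) := by
          rw [hy, show ((n : ℤ)) = (m : ℤ) * 2 from by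
            have : n = m * 2 := by omega
            exact_mod_cast this, mul_smul]
        have hm0 : (m : ℤ) ≠ 0 := by exact_mod_cast hm1.ne'
        exact ⟨w, smul_right_injective (E → ℤ) hm0 h6⟩
      · have hcop : Nat.Coprime 2 n := by
          rw [Nat.Prime.coprime_iff_not_dvd Nat.prime_two]
          rw [Nat.odd_iff] at hodd
          omega
        have hunit : IsUnit (2 : ZMod n) := by
          have h7 := (ZMod.isUnit_iff_coprime 2 n).mpr hcop
          simpa using h7
        have hy0 : ∀ v, ((y v : ℤ) : ZMod n) = 0 := by
          intro v
          exact hunit.mul_left_cancel (by rw [h2t v, mul_zero])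
        have hdvd' : ∀ v, (n : ℤ) ∣ y v := fun v => hdvd n (y v) (hy0 v)
        obtain ⟨w, rfl⟩ := exists_div _ y hdvd'
        rw [_root_.map_smul] at hy
        have hn0 : (n : ℤ) ≠ 0 := by exact_mod_cast hn.ne'
        have h8 := smul_right_injective (E → ℤ) hn0 hy
        exact Submodule.smul_mem L _ ⟨w, h8⟩
    set L' : Submodule ℤ (E → ℤ) := Submodule.comap (LinearMap.lsmul ℤ (E → ℤ) 2) L
      with hL'def
    have hmemL' : ∀ x : E → ℤ, x ∈ L' ↔ (2 : ℤ) • x ∈ L := fun x => Iff.rfl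
    have hLle : L ≤ L' := fun x hx => (hmemL' x).mpr (Submodule.smul_mem L _ hx)
    have hdich : ∀ x : E → ℤ, (2 : ℤ) • x ∈ L → x ∈ L ∨ x - x₀ ∈ L := by
      intro x h2x
      obtain ⟨y, hy⟩ := h2x
      have hy' : T y = ((2 : ℕ) : ℤ) • x := by exact_mod_cast hy
      have hker := hbridge 2 y x hy'
      have hcc := ker_mod2_const hA hconn hker
      have hcases : ((y i₀ : ℤ) : ZMod 2) = 0 ∨ ((y i₀ : ℤ) : ZMod 2) = 1 := by
        generalize ((y i₀ : ℤ) : ZMod 2) = c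
        revert c
        decide
      rcases hcases with hc | hc
      · left
        have hdvd' : ∀ v, (2 : ℤ) ∣ y v := by
          intro v
          refine hdvd 2 (y v) ?_
          rw [hcc v i₀, hc]
        obtain ⟨w, rfl⟩ := exists_div 2 y hdvd'
        rw [_root_.map_smul] at hy
        exact ⟨w, smul_right_injective (E → ℤ) two_ne_zero hy⟩
      · right
        have hdvd' : ∀ v, (2 : ℤ) ∣ (y v - 1) := by
          intro v
          apply hdvd
          push_cast
          rw [hcc v i₀, hc]
          ring
        obtain ⟨w, hw⟩ := exists_div 2 (fun v => y v - 1) hdvd'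
        have hyeq : y = one + (2 : ℤ) • w := by
          funext v
          have h3 := congrFun hw v
          simp only [Pi.smul_apply, smul_eq_mul] at h3 ⊢
          simp only [Pi.add_apply, Pi.smul_apply, smul_eq_mul, honedef]
          linarith [h3]
        have hTy : T y = (2 : ℤ) • x₀ + (2 : ℤ) • T w := by
          rw [hyeq, _root_.map_add, _root_.map_smul, hTone]
        have h8 : (2 : ℤ) • (x - x₀ - T w) = 0 := by
          rw [smul_sub, smul_sub, ← hy, hTy]
          abel
        have h9 := smul_right_injective (E → ℤ) two_ne_zero
          (h8.trans (smul_zero (2 : ℤ)).symm)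
        have h10 : x - x₀ = T w := by
          have := sub_eq_zero.mp h9
          linear_combination (norm := abel) this
        exact ⟨w, h10.symm⟩
    have hsatL' : ∀ (x : E → ℤ) (c : ℤ), c ≠ 0 → c • x ∈ L' → x ∈ L' := by
      intro x c hc hcx
      rw [hmemL'] at hcx ⊢
      set n : ℕ := (2 * c).natAbs with hn
      have hn1 : 0 < n := by
        simp only [hn, Int.natAbs_pos]
        exact mul_ne_zero two_ne_zero hc
      have hnx : (n : ℤ) • x ∈ L := by
        have := habs L x (2 * c) (by rw [mul_smul]; exact hcx)
        exact this
      exact hsat3 x n hn1 hnx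
    set N := (E → ℤ) ⧸ L' with hNdef
    have hNtf : NoZeroSMulDivisors ℤ N := by
      constructor
      intro c q hcq
      by_cases hc : c = 0
      · exact Or.inl hc
      right
      obtain ⟨x, rfl⟩ := Submodule.Quotient.mk_surjective _ q
      rw [← Submodule.Quotient.mk_smul, Submodule.Quotient.mk_eq_zero] at hcq
      rw [Submodule.Quotient.mk_eq_zero]
      exact hsatL' x c hc hcq
    haveI := hNtf
    set Q := (E → ℤ) ⧸ L with hQdef
    set π : Q →ₗ[ℤ] N := Submodule.mapQ L L' LinearMap.id (fun x hx => hLle hx)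
      with hπdef
    have hπsurj : Function.Surjective π := by
      intro nq
      obtain ⟨x, rfl⟩ := Submodule.Quotient.mk_surjective _ nq
      exact ⟨Submodule.Quotient.mk x, by rw [hπdef, Submodule.mapQ_apply]; rfl⟩
    set t : Q := Submodule.Quotient.mk x₀ with htdef
    have h2t : (2 : ℤ) • t = 0 := by
      rw [htdef, ← Submodule.Quotient.mk_smul, Submodule.Quotient.mk_eq_zero]
      exact hx₀L
    have ht0 : t ≠ 0 := by
      rw [htdef, Ne, Submodule.Quotient.mk_eq_zero]
      exact hx₀nL
    have h2t' : (zmultiplesHom Q t) 2 = 0 := by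
      simpa using h2t
    set jz : ZMod 2 →+ Q := ZMod.lift 2 ⟨zmultiplesHom Q t, h2t'⟩ with hjzdef
    have hjz1 : jz 1 = t := by
      have h1 : ((1 : ℤ) : ZMod 2) = 1 := by decide
      rw [hjzdef, ← h1, ZMod.lift_coe]
      simp
    set j3 : ZMod 2 →ₗ[ℤ] Q := jz.toIntLinearMap with hj3def
    have hj3apply : ∀ a, j3 a = jz a := fun a => rfl
    have hzmod : ∀ a : ZMod 2, a = 0 ∨ a = 1 := by decide
    have hj3inj : Function.Injective j3 := by
      intro a b hab
      rcases hzmod a with rfl | rfl <;> rcases hzmod b with rfl | rfl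
      · rfl
      · exfalso
        rw [hj3apply, hj3apply, _root_.map_zero, hjz1] at hab
        exact ht0 hab.symm
      · exfalso
        rw [hj3apply, hj3apply, _root_.map_zero, hjz1] at hab
        exact ht0 hab
      · rfl
    have hπt : π t = 0 := by
      rw [htdef, hπdef, Submodule.mapQ_apply, Submodule.Quotient.mk_eq_zero]
      exact (hmemL' x₀).mpr hx₀L
    have hj3range : LinearMap.range j3 = LinearMap.ker π := by
      apply le_antisymm
      · rintro q ⟨a, rfl⟩
        rcases hzmod a with rfl | rfl
        · rw [_root_.map_zero]
          exact Submodule.zero_mem _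
        · rw [LinearMap.mem_ker, hj3apply, hjz1]
          exact hπt
      · intro q hq
        obtain ⟨x, rfl⟩ := Submodule.Quotient.mk_surjective _ q
        have hx : x ∈ L' := by
          have h5 := LinearMap.mem_ker.mp hq
          rw [hπdef, Submodule.mapQ_apply] at h5
          exact (Submodule.Quotient.mk_eq_zero _).mp h5
        rcases hdich x ((hmemL' x).mp hx) with hxl | hxl
        · exact ⟨0, by rw [_root_.map_zero]; exact ((Submodule.Quotient.mk_eq_zero _).mpr hxl).symm⟩
        · refine ⟨1, ?_⟩
          rw [hj3apply, hjz1, htdef]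
          exact (Submodule.Quotient.eq L).mpr (by simpa using Submodule.neg_mem L hxl)
    obtain ⟨eQsplit⟩ := split_equiv π hπsurj j3 hj3inj hj3range
    -- counting injection for L'
    set ev : (Fin d → ℤ) →ₗ[ℤ] ℤ := LinearMap.proj i₀ with hevdef
    set j2 : (Fin d → ℤ) →ₗ[ℤ] (E → ℤ) :=
      LinearMap.smulRight ev x₀ +
        T ∘ₗ (LinearMap.id - LinearMap.smulRight ev (Pi.single i₀ (1 : ℤ))) with hj2def
    have hj2apply : ∀ y, j2 y = y i₀ • x₀ + T (y - y i₀ • Pi.single i₀ (1 : ℤ)) :=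
      fun y => rfl
    have h2j2 : ∀ y, (2 : ℤ) • j2 y
        = T (y i₀ • one + (2 : ℤ) • (y - y i₀ • Pi.single i₀ (1 : ℤ))) := by
      intro y
      have h5 : T (y i₀ • one + (2 : ℤ) • (y - y i₀ • Pi.single i₀ (1 : ℤ)))
          = y i₀ • ((2 : ℤ) • x₀) + (2 : ℤ) • T (y - y i₀ • Pi.single i₀ (1 : ℤ)) := by
        rw [_root_.map_add, _root_.map_smul, _root_.map_smul, hTone]
      rw [h5, hj2apply, smul_add, smul_comm]
    have hj2inj : Function.Injective j2 := by
      refine LinearMap.ker_eq_bot.mp (LinearMap.ker_eq_bot'.mpr ?_)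
      intro y hy
      have h0 : T (y i₀ • one + (2 : ℤ) • (y - y i₀ • Pi.single i₀ (1 : ℤ))) = 0 := by
        rw [← h2j2 y, hy, smul_zero]
      have hz : y i₀ • one + (2 : ℤ) • (y - y i₀ • Pi.single i₀ (1 : ℤ)) = 0 := by
        apply hTinj
        rw [h0, _root_.map_zero]
      have hzi := congrFun hz i₀
      simp only [Pi.add_apply, Pi.smul_apply, smul_eq_mul, honedef, Pi.sub_apply,
        Pi.single_eq_same, Pi.zero_apply, mul_one] at hzi
      have hyi : y i₀ = 0 := by omega
      funext v
      have hzv := congrFun hz v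
      simp only [Pi.add_apply, Pi.smul_apply, smul_eq_mul, honedef, Pi.sub_apply,
        Pi.zero_apply, mul_one, hyi, zero_mul, zero_add, mul_zero, zero_smul] at hzv
      simp only [Pi.zero_apply]
      omega
    have hTrange : ∀ z, T z ∈ LinearMap.range j2 := by
      intro z
      refine ⟨z - z i₀ • one + (2 * z i₀) • Pi.single i₀ (1 : ℤ), ?_⟩
      set y := z - z i₀ • one + (2 * z i₀) • Pi.single i₀ (1 : ℤ) with hydef
      have hyi : y i₀ = 2 * z i₀ := by
        simp [hydef, honedef, Pi.single_eq_same]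
      have hyrest : y - y i₀ • Pi.single i₀ (1 : ℤ) = z - z i₀ • one := by
        rw [hyi, hydef]
        abel
      rw [hj2apply, hyrest, hyi, _root_.map_sub, _root_.map_smul, hTone]
      rw [show (2 * z i₀) • x₀ = z i₀ • ((2:ℤ) • x₀) from by
        rw [smul_smul]; ring_nf]
      abel
    have hj2range : LinearMap.range j2 = LinearMap.ker L'.mkQ := by
      rw [Submodule.ker_mkQ]
      apply le_antisymm
      · rintro _ ⟨y, rfl⟩
        show (2 : ℤ) • j2 y ∈ L
        rw [h2j2 y]
        exact ⟨_, rfl⟩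
      · intro x hx
        rcases hdich x ((hmemL' x).mp hx) with hxl | hxl
        · obtain ⟨z, hz⟩ := hxl
          rw [← hz]
          exact hTrange z
        · obtain ⟨z, hz⟩ := hxl
          have hx₀r : x₀ ∈ LinearMap.range j2 := by
            refine ⟨Pi.single i₀ (1 : ℤ), ?_⟩
            rw [hj2apply]
            simp [Pi.single_eq_same]
          rw [show x = x₀ + T z from by rw [hz]; abel]
          exact add_mem hx₀r (hTrange z)
    obtain ⟨eE⟩ := split_equiv L'.mkQ (Submodule.mkQ_surjective L') j2 hj2inj hj2range
    obtain ⟨nN, ⟨eN⟩⟩ := free_fin N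
    have hcount : Fintype.card E = d + nN :=
      hEquivE _ ((eE.trans (LinearEquiv.prodCongr (LinearEquiv.refl ℤ (Fin d → ℤ)) eN)).trans
        (prodFinEquiv d nN))
    rw [show Fintype.card E - d = nN from by omega]
    exact ⟨(eQsplit.toAddEquiv.trans
      (AddEquiv.prodCongr (AddEquiv.refl (ZMod 2)) eN.toAddEquiv)).trans
      AddEquiv.prodComm⟩
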